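/- Let (T, μ) be a measure space, N₁, N₂ positive integers, g₁ : Fin N₁ → T → ℝ and g₂ : Fin N₂ → T → ℝ families of square-integrable functions, P and Q the Gram matrices P_{ij} = ∫ g₁ᵢ g₁ⱼ dμ and Q_{ij} = ∫ g₂ᵢ g₂ⱼ dμ, with P positive definite, and A an N₁ × N₂ real matrix. Suppose P^{1/2} A Q Aᵀ P^{1/2} = ∑_k σ_k² w_k w_kᵀ where (w_k) is an orthonormal basis of ℝ^{N₁} and σ_k² ≥ 0 (a spectral decomposition). Define ψ_k(s) = (P^{-1/2} w_k)ᵀ g₁(s) and Ĉ(s,u) = g₁(s)ᵀ A g₂(u), where g₁(s) ∈ ℝ^{N₁} and g₂(u) ∈ ℝ^{N₂} denote the vectors of values. Then for all s, t ∈ T: ∑_k σ_k² ψ_k(s) ψ_k(t) = ∫_T Ĉ(s,u) Ĉ(t,u) dμ(u). -/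

import Mathlib

open MeasureTheory Matrix

private lemma sum3_swap {R : Type*} [AddCommMonoid R] {n₁ n₂ n₃ : ℕ}
    (f : Fin n₁ → Fin n₂ → Fin n₃ → R) :
    ∑ k, ∑ i, ∑ j, f k i j = ∑ i, ∑ j, ∑ k, f k i j :=
  calc ∑ k, ∑ i, ∑ j, f k i j
      = ∑ i, ∑ k, ∑ j, f k i j := Finset.sum_comm
    _ = ∑ i, ∑ j, ∑ k, f k i j := Finset.sum_congr rfl fun _ _ => Finset.sum_comm

private lemma sum4_swap {R : Type*} [AddCommMonoid R] {n₁ n₂ n₃ n₄ : ℕ}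
    (f : Fin n₁ → Fin n₂ → Fin n₃ → Fin n₄ → R) :
    ∑ a, ∑ b, ∑ i, ∑ j, f a b i j = ∑ i, ∑ j, ∑ a, ∑ b, f a b i j :=
  calc ∑ a, ∑ b, ∑ i, ∑ j, f a b i j
      = ∑ a, ∑ i, ∑ b, ∑ j, f a b i j :=
        Finset.sum_congr rfl fun _ _ => Finset.sum_comm
    _ = ∑ i, ∑ a, ∑ b, ∑ j, f a b i j := Finset.sum_comm
    _ = ∑ i, ∑ a, ∑ j, ∑ b, f a b i j :=
        Finset.sum_congr rfl fun _ _ => Finset.sum_congr rfl fun _ _ => Finset.sum_comm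
    _ = ∑ i, ∑ j, ∑ a, ∑ b, f a b i j :=
        Finset.sum_congr rfl fun _ _ => Finset.sum_comm

/-- The identity from the proof of Lemma 2: if `Ĉ(s,u) = g₁(s)ᵀ A g₂(u)`,
`P = ∫ g₁ g₁ᵀ` and `Q = ∫ g₂ g₂ᵀ` are the Gram matrices, `S = P^{1/2}` is the
positive-definite square root of `P`, and `S A Q Aᵀ S = ∑ k σ_k² w_k w_kᵀ` is a spectral
decomposition with `(w_k)` an orthonormal basis of `ℝ^{N₁}` and `σ_k² ≥ 0`, then for the
functions `ψ_k(s) = (S⁻¹ w_k)ᵀ g₁(s)` one has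
`∑ k σ_k² ψ_k(s) ψ_k(t) = ∫ Ĉ(s,u) Ĉ(t,u) dμ(u)` for all `s, t`. -/
theorem singular_decomposition_identity
    {T : Type*} [MeasurableSpace T] (μ : Measure T)
    (N₁ N₂ : ℕ) (hN₁ : 0 < N₁) (hN₂ : 0 < N₂)
    (g₁ : Fin N₁ → T → ℝ) (g₂ : Fin N₂ → T → ℝ)
    (hg₁ : ∀ i, MemLp (g₁ i) 2 μ) (hg₂ : ∀ j, MemLp (g₂ j) 2 μ)
    (P : Matrix (Fin N₁) (Fin N₁) ℝ)
    (hP : P = Matrix.of fun i j => ∫ u, g₁ i u * g₁ j u ∂μ)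
    (Q : Matrix (Fin N₂) (Fin N₂) ℝ)
    (hQ : Q = Matrix.of fun i j => ∫ u, g₂ i u * g₂ j u ∂μ)
    (hPpd : P.PosDef)
    (S : Matrix (Fin N₁) (Fin N₁) ℝ) (hSpd : S.PosDef) (hSS : S * S = P)
    (A : Matrix (Fin N₁) (Fin N₂) ℝ)
    (w : Fin N₁ → Fin N₁ → ℝ)
    (hw : ∀ k₁ k₂, ∑ i, w k₁ i * w k₂ i = if k₁ = k₂ then (1 : ℝ) else 0)
    (σsq : Fin N₁ → ℝ) (hσsq : ∀ k, 0 ≤ σsq k)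
    (hdecomp : S * (A * Q * Aᵀ) * S = ∑ k, σsq k • Matrix.vecMulVec (w k) (w k))
    (ψ : Fin N₁ → T → ℝ)
    (hψ : ∀ k, ψ k = fun s => ∑ i, (S⁻¹ *ᵥ w k) i * g₁ i s)
    (Chat : T → T → ℝ)
    (hChat : Chat = fun s u => ∑ i, ∑ j, g₁ i s * A i j * g₂ j u) :
    ∀ s t : T, ∑ k, σsq k * ψ k s * ψ k t = ∫ u, Chat s u * Chat t u ∂μ := by
  intro s t
  classical
  -- integrability of products of the g₂'s
  have hint : ∀ a b : Fin N₂, Integrable (fun u => g₂ a u * g₂ b u) μ := by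
    intro a b
    have h : MemLp ((g₂ a) • (g₂ b)) 1 μ := by
      refine (hg₂ b).smul (hg₂ a) (hpqr := ⟨?_⟩)
      simp only [one_div, inv_one]
      exact ENNReal.inv_two_add_inv_two
    exact memLp_one_iff_integrable.mp h
  have hSu : IsUnit S.det := hSpd.det_pos.ne'.isUnit
  have hMeq : A * Q * Aᵀ = S⁻¹ * (∑ k, σsq k • Matrix.vecMulVec (w k) (w k)) * S⁻¹ := by
    rw [← hdecomp]
    calc A * Q * Aᵀ = (S⁻¹ * S) * (A * Q * Aᵀ) * (S * S⁻¹) := by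
          rw [Matrix.nonsing_inv_mul S hSu, Matrix.mul_nonsing_inv S hSu,
            Matrix.one_mul, Matrix.mul_one]
      _ = S⁻¹ * (S * (A * Q * Aᵀ) * S) * S⁻¹ := by simp only [Matrix.mul_assoc]
  have hSinvT : S⁻¹ᵀ = S⁻¹ := by
    have h := (hSpd.isHermitian.inv).eq
    rwa [Matrix.conjTranspose_eq_transpose_of_trivial] at h
  have key : ∀ k, S⁻¹ * (σsq k • Matrix.vecMulVec (w k) (w k)) * S⁻¹
      = σsq k • Matrix.vecMulVec (S⁻¹ *ᵥ w k) (S⁻¹ *ᵥ w k) := by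
    intro k
    rw [Matrix.mul_smul, Matrix.smul_mul]
    congr 1
    rw [Matrix.vecMulVec_eq Unit, Matrix.vecMulVec_eq Unit]
    calc S⁻¹ * (replicateCol Unit (w k) * replicateRow Unit (w k)) * S⁻¹
        = (S⁻¹ * replicateCol Unit (w k)) * (replicateRow Unit (w k) * S⁻¹) := by
          simp only [Matrix.mul_assoc]
      _ = replicateCol Unit (S⁻¹ *ᵥ w k) * replicateRow Unit (w k ᵥ* S⁻¹) := by
          rw [Matrix.replicateCol_mulVec, Matrix.replicateRow_vecMul]
      _ = replicateCol Unit (S⁻¹ *ᵥ w k) * replicateRow Unit (S⁻¹ *ᵥ w k) := by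
          rw [← Matrix.mulVec_transpose, hSinvT]
  have hM2 : A * Q * Aᵀ = ∑ k, σsq k • Matrix.vecMulVec (S⁻¹ *ᵥ w k) (S⁻¹ *ᵥ w k) := by
    rw [hMeq, Matrix.mul_sum, Matrix.sum_mul]
    exact Finset.sum_congr rfl fun k _ => key k
  have hMentry : ∀ i j, (A * Q * Aᵀ) i j
      = ∑ k, σsq k * ((S⁻¹ *ᵥ w k) i) * ((S⁻¹ *ᵥ w k) j) := by
    intro i j
    rw [hM2]
    simp only [Matrix.sum_apply, Matrix.smul_apply, Matrix.vecMulVec_apply, smul_eq_mul]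
    exact Finset.sum_congr rfl fun k _ => by ring
  -- the left-hand side
  have hL : ∑ k, σsq k * ψ k s * ψ k t = ∑ i, ∑ j, g₁ i s * g₁ j t * (A * Q * Aᵀ) i j := by
    simp only [hψ]
    simp only [Finset.mul_sum, Finset.sum_mul]
    rw [sum3_swap, Finset.sum_comm]
    refine Finset.sum_congr rfl fun i _ => Finset.sum_congr rfl fun j _ => ?_
    rw [hMentry i j, Finset.mul_sum]
    exact Finset.sum_congr rfl fun k _ => by ring
  -- rewrite Chat as a single sum
  have hCs : ∀ (x : T) (u : T), Chat x u = ∑ a, (∑ i, g₁ i x * A i a) * g₂ a u := by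
    intro x u
    rw [hChat]
    dsimp only
    rw [Finset.sum_comm]
    exact Finset.sum_congr rfl fun a _ => (Finset.sum_mul _ _ _).symm
  have hprod : ∀ u : T, Chat s u * Chat t u
      = ∑ a, ∑ b, ((∑ i, g₁ i s * A i a) * (∑ j, g₁ j t * A j b)) * (g₂ a u * g₂ b u) := by
    intro u
    rw [hCs s u, hCs t u, Finset.sum_mul_sum]
    exact Finset.sum_congr rfl fun a _ => Finset.sum_congr rfl fun b _ => by ring
  -- the right-hand side
  have hR : ∫ u, Chat s u * Chat t u ∂μ
      = ∑ a, ∑ b, ((∑ i, g₁ i s * A i a) * (∑ j, g₁ j t * A j b)) * Q a b := by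
    simp only [hprod]
    rw [integral_finset_sum _ (fun a _ =>
      integrable_finset_sum _ fun b _ => (hint a b).const_mul _)]
    refine Finset.sum_congr rfl fun a _ => ?_
    rw [integral_finset_sum _ (fun b _ => (hint a b).const_mul _)]
    refine Finset.sum_congr rfl fun b _ => ?_
    rw [integral_const_mul, hQ]
    rfl
  rw [hL, hR]
  symm
  -- final algebraic identity
  simp only [Finset.mul_sum, Finset.sum_mul, Matrix.mul_apply, Matrix.transpose_apply]
  rw [sum4_swap, Finset.sum_comm]
  refine Finset.sum_congr rfl fun i _ => Finset.sum_congr rfl fun j _ => ?_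
  rw [Finset.sum_comm]
  exact Finset.sum_congr rfl fun b _ => Finset.sum_congr rfl fun a _ => by ring
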